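/- Uniqueness of the influence function in the nonparametric model: if g : 𝒴×𝒮×{0,1}×𝒳 → ℝ satisfies E[g(O)] = 0 and, for every differentiable one-parameter family (p_t) of strictly positive joint pmfs with p_0 the true pmf of O, dθ(t)/dt|_{t=0} = E[g(O)·U] with U the score of the family, then g(O) = S P-almost surely, where S is the efficient influence function S := 1{E=1}·[P(M=M|E=0,X)/(P(E=1|X)·P(M=M|E=1,X))]·(Y − b(M,X)) + [1{E=0}/P(E=0|X)]·(b(M,X) − η(X)) + η(X) − θ0. -/

import Mathlib

set_option linter.unusedSectionVars false
set_option linter.unusedVariables false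



open scoped BigOperators

/-- The sample space of the observed data `O = (Y, M, E, X)`, where `Y` takes values in a
finite set `𝒴` of reals (encoded by a finite type `𝒴` with a value map), `M` in a finite
set `𝒮`, `E` in `{0,1}` (encoded as `Bool`) and `X` in a finite set `𝒳`. -/
abbrev Obs (𝒴 𝒮 𝒳 : Type*) := 𝒴 × 𝒮 × Bool × 𝒳

noncomputable section

variable {𝒴 𝒮 𝒳 : Type*} [Fintype 𝒴] [Fintype 𝒮] [Fintype 𝒳]

/-- Marginal pmf of `X`: `f(x) = Σ_{y,m,e} p(y,m,e,x)`. -/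
def margX (p : Obs 𝒴 𝒮 𝒳 → ℝ) (x : 𝒳) : ℝ :=
  ∑ y : 𝒴, ∑ m : 𝒮, ∑ e : Bool, p (y, m, e, x)

/-- Joint pmf of `(E, X)`. -/
def jointEX (p : Obs 𝒴 𝒮 𝒳 → ℝ) (e : Bool) (x : 𝒳) : ℝ :=
  ∑ y : 𝒴, ∑ m : 𝒮, p (y, m, e, x)

/-- Joint pmf of `(M, E, X)`. -/
def jointMEX (p : Obs 𝒴 𝒮 𝒳 → ℝ) (m : 𝒮) (e : Bool) (x : 𝒳) : ℝ :=
  ∑ y : 𝒴, p (y, m, e, x)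

/-- Conditional pmf `P(E=e | X=x)` computed under `p`, as a ratio of sums. -/
def fE (p : Obs 𝒴 𝒮 𝒳 → ℝ) (e : Bool) (x : 𝒳) : ℝ :=
  jointEX p e x / margX p x

/-- Conditional pmf `P(M=m | E=e, X=x)` computed under `p`, as a ratio of sums. -/
def fM (p : Obs 𝒴 𝒮 𝒳 → ℝ) (m : 𝒮) (e : Bool) (x : 𝒳) : ℝ :=
  jointMEX p m e x / jointEX p e x

/-- Outcome regression `b(m,x) = E(Y | E=1, M=m, X=x)` computed under `p`, where
`val : 𝒴 → ℝ` gives the real values of the outcome. -/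
def bFun (val : 𝒴 → ℝ) (p : Obs 𝒴 𝒮 𝒳 → ℝ) (m : 𝒮) (x : 𝒳) : ℝ :=
  (∑ y : 𝒴, val y * p (y, m, true, x)) / jointMEX p m true x

/-- `η(x) = Σ_m b(m,x)·P(M=m | E=0, X=x)` computed under `p`. -/
def etaFun (val : 𝒴 → ℝ) (p : Obs 𝒴 𝒮 𝒳 → ℝ) (x : 𝒳) : ℝ :=
  ∑ m : 𝒮, bFun val p m x * fM p m false x

/-- The mediation functional
`θ(p) = Σ_{m,x} E_p(Y|E=1,M=m,X=x)·f_p(m|E=0,X=x)·f_p(x)` computed under the pmf `p`. -/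
def thetaP (val : 𝒴 → ℝ) (p : Obs 𝒴 𝒮 𝒳 → ℝ) : ℝ :=
  ∑ x : 𝒳, etaFun val p x * margX p x

/-- The efficient influence function `S` of the mediation functional:
`S := 1{E=1}·[P(M=M|E=0,X)/(P(E=1|X)·P(M=M|E=1,X))]·(Y − b(M,X))
  + [1{E=0}/P(E=0|X)]·(b(M,X) − η(X)) + η(X) − θ0`. -/
def effIF (val : 𝒴 → ℝ) (p : Obs 𝒴 𝒮 𝒳 → ℝ) : Obs 𝒴 𝒮 𝒳 → ℝ :=
  fun o =>
    (if o.2.2.1 then (1:ℝ) else 0) *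
        (fM p o.2.1 false o.2.2.2 / (fE p true o.2.2.2 * fM p o.2.1 true o.2.2.2)) *
        (val o.1 - bFun val p o.2.1 o.2.2.2) +
      (if o.2.2.1 then (0:ℝ) else 1) / fE p false o.2.2.2 *
        (bFun val p o.2.1 o.2.2.2 - etaFun val p o.2.2.2) +
      etaFun val p o.2.2.2 - thetaP val p

end


noncomputable section Aux
namespace MedIFAux
variable {𝒴 𝒮 𝒳 : Type*} [Fintype 𝒴] [Fintype 𝒮] [Fintype 𝒳]

lemma sum_affine {ι : Type*} [Fintype ι] (f g : ι → ℝ) (t : ℝ) :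
    ∑ i, f i * (1 + t * g i) = (∑ i, f i) + t * ∑ i, f i * g i := by
  rw [Finset.mul_sum, ← Finset.sum_add_distrib]
  exact Finset.sum_congr rfl fun i _ => by ring

lemma sum_comm3 {α β γ : Type*} [Fintype α] [Fintype β] [Fintype γ] (f : α → β → γ → ℝ) :
    ∑ a, ∑ b, ∑ c, f a b c = ∑ c, ∑ b, ∑ a, f a b c :=
  calc ∑ a, ∑ b, ∑ c, f a b c
      = ∑ a, ∑ c, ∑ b, f a b c := Finset.sum_congr rfl fun a _ => Finset.sum_comm
    _ = ∑ c, ∑ a, ∑ b, f a b c := Finset.sum_comm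
    _ = ∑ c, ∑ b, ∑ a, f a b c := Finset.sum_congr rfl fun c _ => Finset.sum_comm

variable (val : 𝒴 → ℝ) (p h : Obs 𝒴 𝒮 𝒳 → ℝ)

def AC (m : 𝒮) (x : 𝒳) : ℝ := ∑ y : 𝒴, val y * p (y, m, true, x) * h (y, m, true, x)
def AX (m : 𝒮) (x : 𝒳) : ℝ := ∑ y : 𝒴, val y * p (y, m, true, x)
def M1 (m : 𝒮) (e : Bool) (x : 𝒳) : ℝ := ∑ y : 𝒴, p (y, m, e, x) * h (y, m, e, x)
def E1 (e : Bool) (x : 𝒳) : ℝ := ∑ y : 𝒴, ∑ m : 𝒮, p (y, m, e, x) * h (y, m, e, x)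
def W1 (x : 𝒳) : ℝ := ∑ y : 𝒴, ∑ m : 𝒮, ∑ e : Bool, p (y, m, e, x) * h (y, m, e, x)

def dT (m : 𝒮) (x : 𝒳) : ℝ :=
  (AC val p h m x * jointMEX p m true x - AX val p m x * M1 p h m true x) / jointMEX p m true x ^ 2
    * (jointMEX p m false x / jointEX p false x)
  + AX val p m x / jointMEX p m true x
    * ((M1 p h m false x * jointEX p false x - jointMEX p m false x * E1 p h false x)
        / jointEX p false x ^ 2)

def Dval : ℝ :=
  ∑ x : 𝒳, ((∑ m : 𝒮, dT val p h m x) * margX p x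
    + (∑ m : 𝒮, (AX val p m x / jointMEX p m true x) * (jointMEX p m false x / jointEX p false x))
        * W1 p h x)

lemma E1_eq_sum_M1 (e : Bool) (x : 𝒳) : E1 p h e x = ∑ m : 𝒮, M1 p h m e x :=
  Finset.sum_comm

lemma W1_eq (x : 𝒳) : W1 p h x = E1 p h true x + E1 p h false x := by
  rw [W1, E1, E1, ← Finset.sum_add_distrib]
  refine Finset.sum_congr rfl fun y _ => ?_
  rw [← Finset.sum_add_distrib]
  refine Finset.sum_congr rfl fun m _ => ?_
  rw [Fintype.sum_bool]

lemma etaFun_eq (x : 𝒳) : etaFun val p x =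
    ∑ m : 𝒮, (AX val p m x / jointMEX p m true x) *
      (jointMEX p m false x / jointEX p false x) := rfl

end MedIFAux
end Aux

namespace MedIFAux
variable {𝒴 𝒮 𝒳 : Type*} [Fintype 𝒴] [Fintype 𝒮] [Fintype 𝒳]
variable (val : 𝒴 → ℝ) (p h : Obs 𝒴 𝒮 𝒳 → ℝ)

lemma bFun_eq (m : 𝒮) (x : 𝒳) :
    bFun val p m x = AX val p m x / jointMEX p m true x := rfl

lemma dT_mul {m : 𝒮} {x : 𝒳} (hn : jointMEX p m true x ≠ 0) (hr : jointEX p true x ≠ 0)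
    (hd : jointEX p false x ≠ 0) (hw : margX p x ≠ 0) :
    dT val p h m x * margX p x
      = (fM p m false x / (fE p true x * fM p m true x) * AC val p h m x
          - fM p m false x / (fE p true x * fM p m true x) * bFun val p m x * M1 p h m true x
          + AX val p m x * M1 p h m false x * margX p x
              / (jointMEX p m true x * jointEX p false x))
        - AX val p m x / jointMEX p m true x * (jointMEX p m false x / jointEX p false x)
            * (margX p x / jointEX p false x * E1 p h false x) := by
  simp only [dT, fM, fE, bFun_eq]
  field_simp
  ring

lemma key_x (hn : ∀ m x, jointMEX p m true x ≠ 0) (hr : ∀ x, jointEX p true x ≠ 0)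
    (hd : ∀ x, jointEX p false x ≠ 0) (hw : ∀ x, margX p x ≠ 0) (x : 𝒳) :
    (∑ m : 𝒮, dT val p h m x) * margX p x + etaFun val p x * W1 p h x
      = (∑ m : 𝒮, ∑ y : 𝒴,
          p (y, m, true, x) * h (y, m, true, x) * (effIF val p (y, m, true, x) + thetaP val p))
        + ∑ m : 𝒮, ∑ y : 𝒴,
            p (y, m, false, x) * h (y, m, false, x) * (effIF val p (y, m, false, x) + thetaP val p) := by
  have hSt : ∀ m : 𝒮,
      (∑ y : 𝒴, p (y, m, true, x) * h (y, m, true, x) * (effIF val p (y, m, true, x) + thetaP val p))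
        = (fM p m false x / (fE p true x * fM p m true x) * AC val p h m x
            - fM p m false x / (fE p true x * fM p m true x) * bFun val p m x * M1 p h m true x)
          + etaFun val p x * M1 p h m true x := by
    intro m
    have hy : ∀ y ∈ Finset.univ, p (y, m, true, x) * h (y, m, true, x) * (effIF val p (y, m, true, x) + thetaP val p)
        = (fM p m false x / (fE p true x * fM p m true x) * (val y * p (y, m, true, x) * h (y, m, true, x))
            - fM p m false x / (fE p true x * fM p m true x) * bFun val p m x * (p (y, m, true, x) * h (y, m, true, x)))
          + etaFun val p x * (p (y, m, true, x) * h (y, m, true, x)) := by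
      intro y _
      simp [effIF]
      ring
    rw [Finset.sum_congr rfl hy, Finset.sum_add_distrib, Finset.sum_sub_distrib,
      ← Finset.mul_sum, ← Finset.mul_sum, ← Finset.mul_sum]
    rfl
  have hSf : ∀ m : 𝒮,
      (∑ y : 𝒴, p (y, m, false, x) * h (y, m, false, x) * (effIF val p (y, m, false, x) + thetaP val p))
        = AX val p m x * M1 p h m false x * margX p x / (jointMEX p m true x * jointEX p false x)
          + (etaFun val p x * M1 p h m false x
              - etaFun val p x * (margX p x / jointEX p false x) * M1 p h m false x) := by
    intro m
    have hy : ∀ y ∈ Finset.univ, p (y, m, false, x) * h (y, m, false, x) * (effIF val p (y, m, false, x) + thetaP val p)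
        = p (y, m, false, x) * h (y, m, false, x) *
            (1 / fE p false x * (bFun val p m x - etaFun val p x) + etaFun val p x) := by
      intro y _
      simp [effIF]
      try ring
    rw [Finset.sum_congr rfl hy, ← Finset.sum_mul]
    show M1 p h m false x * _ = _
    rw [mul_comm]
    simp only [fE, bFun_eq]
    field_simp
    ring
  rw [Finset.sum_congr rfl fun m _ => hSt m, Finset.sum_congr rfl fun m _ => hSf m,
    Finset.sum_mul, Finset.sum_congr rfl fun m (_ : m ∈ Finset.univ) => dT_mul val p h (hn m x) (hr x) (hd x) (hw x)]
  simp only [Finset.sum_add_distrib, Finset.sum_sub_distrib, ← Finset.mul_sum, ← Finset.sum_mul]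
  rw [← etaFun_eq, ← E1_eq_sum_M1, ← E1_eq_sum_M1, W1_eq]
  ring
end MedIFAux

namespace MedIFAux
variable {𝒴 𝒮 𝒳 : Type*} [Fintype 𝒴] [Fintype 𝒮] [Fintype 𝒳]
variable (val : 𝒴 → ℝ) (p h : Obs 𝒴 𝒮 𝒳 → ℝ)

lemma key_algebra (hn : ∀ m x, jointMEX p m true x ≠ 0) (hr : ∀ x, jointEX p true x ≠ 0)
    (hd : ∀ x, jointEX p false x ≠ 0) (hw : ∀ x, margX p x ≠ 0) :
    Dval val p h = ∑ o : Obs 𝒴 𝒮 𝒳, p o * h o * (effIF val p o + thetaP val p) := by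
  rw [show (∑ o : Obs 𝒴 𝒮 𝒳, p o * h o * (effIF val p o + thetaP val p))
        = ∑ y : 𝒴, ∑ m : 𝒮,
            ((∑ x : 𝒳, p (y, m, true, x) * h (y, m, true, x) *
                (effIF val p (y, m, true, x) + thetaP val p))
              + ∑ x : 𝒳, p (y, m, false, x) * h (y, m, false, x) *
                  (effIF val p (y, m, false, x) + thetaP val p))
      from by simp only [Fintype.sum_prod_type, Fintype.sum_bool]]
  simp only [Finset.sum_add_distrib]
  rw [sum_comm3 (fun y m x => p (y, m, true, x) * h (y, m, true, x) *
        (effIF val p (y, m, true, x) + thetaP val p)),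
    sum_comm3 (fun y m x => p (y, m, false, x) * h (y, m, false, x) *
        (effIF val p (y, m, false, x) + thetaP val p)),
    Dval, ← Finset.sum_add_distrib]
  refine Finset.sum_congr rfl fun x _ => ?_
  rw [← etaFun_eq]
  exact key_x val p h hn hr hd hw x

lemma theta_path (t : ℝ) :
    thetaP val (fun o => p o * (1 + t * h o)) =
      ∑ x : 𝒳, (∑ m : 𝒮,
        ((AX val p m x + t * AC val p h m x) / (jointMEX p m true x + t * M1 p h m true x)) *
        ((jointMEX p m false x + t * M1 p h m false x) / (jointEX p false x + t * E1 p h false x)))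
        * (margX p x + t * W1 p h x) := by
  have hA : ∀ (m : 𝒮) (x : 𝒳),
      (∑ y : 𝒴, val y * (p (y,m,true,x) * (1 + t * h (y,m,true,x))))
        = AX val p m x + t * AC val p h m x := by
    intro m x
    rw [AX, AC, ← sum_affine]
    exact Finset.sum_congr rfl fun y _ => by ring
  have hM : ∀ (m : 𝒮) (e : Bool) (x : 𝒳),
      (∑ y : 𝒴, p (y,m,e,x) * (1 + t * h (y,m,e,x)))
        = jointMEX p m e x + t * M1 p h m e x := fun m e x => sum_affine _ _ t
  have hE : ∀ (e : Bool) (x : 𝒳),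
      (∑ y : 𝒴, ∑ m : 𝒮, p (y,m,e,x) * (1 + t * h (y,m,e,x)))
        = jointEX p e x + t * E1 p h e x := by
    intro e x
    rw [jointEX, E1, Finset.mul_sum, ← Finset.sum_add_distrib]
    exact Finset.sum_congr rfl fun y _ => sum_affine _ _ t
  have hW : ∀ (x : 𝒳),
      (∑ y : 𝒴, ∑ m : 𝒮, ∑ e : Bool, p (y,m,e,x) * (1 + t * h (y,m,e,x)))
        = margX p x + t * W1 p h x := by
    intro x
    rw [margX, W1, Finset.mul_sum, ← Finset.sum_add_distrib]
    refine Finset.sum_congr rfl fun y _ => ?_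
    rw [Finset.mul_sum, ← Finset.sum_add_distrib]
    exact Finset.sum_congr rfl fun m _ => sum_affine _ _ t
  simp only [thetaP, etaFun, bFun, fM, margX, jointEX, jointMEX] at *
  simp only [hA, hM, hE, hW]

lemma theta_hasDeriv (hn : ∀ m x, jointMEX p m true x ≠ 0) (hd : ∀ x, jointEX p false x ≠ 0) :
    HasDerivAt (fun t => thetaP val (fun o => p o * (1 + t * h o))) (Dval val p h) 0 := by
  have heq : (fun t => thetaP val (fun o => p o * (1 + t * h o)))
      = fun t => ∑ x : 𝒳, (∑ m : 𝒮,
        ((AX val p m x + t * AC val p h m x) / (jointMEX p m true x + t * M1 p h m true x)) *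
        ((jointMEX p m false x + t * M1 p h m false x) / (jointEX p false x + t * E1 p h false x)))
        * (margX p x + t * W1 p h x) := funext (theta_path val p h)
  rw [heq, Dval]
  apply HasDerivAt.fun_sum
  intro x _
  have haff : ∀ (a b : ℝ), HasDerivAt (fun t : ℝ => a + t * b) b 0 := by
    intro a b
    simpa using ((hasDerivAt_id (0:ℝ)).mul_const b).const_add a
  have hinner : HasDerivAt (fun t => ∑ m : 𝒮,
      ((AX val p m x + t * AC val p h m x) / (jointMEX p m true x + t * M1 p h m true x)) *
      ((jointMEX p m false x + t * M1 p h m false x) / (jointEX p false x + t * E1 p h false x)))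
      (∑ m : 𝒮, dT val p h m x) 0 := by
    apply HasDerivAt.fun_sum
    intro m _
    have h1 := ((haff (AX val p m x) (AC val p h m x)).fun_div
      (haff (jointMEX p m true x) (M1 p h m true x)) (by simpa using hn m x))
    have h2 := ((haff (jointMEX p m false x) (M1 p h m false x)).fun_div
      (haff (jointEX p false x) (E1 p h false x)) (by simpa using hd x))
    have := h1.fun_mul h2
    simp only [zero_mul, add_zero] at this
    exact this
  have := hinner.fun_mul (haff (margX p x) (W1 p h x))
  simp only [zero_mul, add_zero] at this
  exact this

lemma effIF_mean_zero (hn : ∀ m x, jointMEX p m true x ≠ 0) (hr : ∀ x, jointEX p true x ≠ 0)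
    (hd : ∀ x, jointEX p false x ≠ 0) (hw : ∀ x, margX p x ≠ 0)
    (hsum : ∑ o : Obs 𝒴 𝒮 𝒳, p o = 1) :
    ∑ o : Obs 𝒴 𝒮 𝒳, p o * effIF val p o = 0 := by
  have h1 := key_algebra val p (fun _ => 1) hn hr hd hw
  have hDval : Dval val p (fun _ => 1) = thetaP val p := by
    rw [Dval, thetaP]
    refine Finset.sum_congr rfl fun x _ => ?_
    have hz : ∀ m : 𝒮, dT val p (fun _ => 1) m x = 0 := by
      intro m
      simp [dT, AC, AX, M1, E1, jointMEX, jointEX]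
    rw [Finset.sum_congr rfl fun m _ => hz m, Finset.sum_const_zero, zero_mul, zero_add,
      ← etaFun_eq, show W1 p (fun _ => 1) x = margX p x from by simp [W1, margX]]
  rw [hDval] at h1
  have h2 : ∑ o : Obs 𝒴 𝒮 𝒳, p o * (1:ℝ) * (effIF val p o + thetaP val p)
      = (∑ o : Obs 𝒴 𝒮 𝒳, p o * effIF val p o) + thetaP val p := by
    rw [show (∑ o : Obs 𝒴 𝒮 𝒳, p o * (1:ℝ) * (effIF val p o + thetaP val p))
          = ∑ o : Obs 𝒴 𝒮 𝒳, (p o * effIF val p o + p o * thetaP val p)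
        from Finset.sum_congr rfl fun o _ => by ring,
      Finset.sum_add_distrib, ← Finset.sum_mul, hsum, one_mul]
  rw [h2] at h1
  linarith

end MedIFAux

/-- uniqueness of the influence function in the nonparametric model: any
mean-zero `g` satisfying the pathwise-derivative property `dθ(t)/dt|₀ = E[g·U]` for every
differentiable one-parameter family agrees with the efficient influence function `S`
everywhere (i.e. `P`-a.s., since `p` is strictly positive). -/
theorem mediation_influence_function_unique
    {𝒴 𝒮 𝒳 : Type*} [Fintype 𝒴] [Fintype 𝒮] [Fintype 𝒳] (val : 𝒴 → ℝ)
    (p : Obs 𝒴 𝒮 𝒳 → ℝ)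
    (hpos : ∀ o, 0 < p o) (hsum : ∑ o : Obs 𝒴 𝒮 𝒳, p o = 1)
    (g : Obs 𝒴 𝒮 𝒳 → ℝ)
    (hg0 : ∑ o : Obs 𝒴 𝒮 𝒳, p o * g o = 0)
    (hg : ∀ (ε : ℝ), 0 < ε → ∀ pt : ℝ → Obs 𝒴 𝒮 𝒳 → ℝ,
      pt 0 = p →
      (∀ t, |t| < ε → ∀ o, 0 < pt t o) →
      (∀ t, |t| < ε → ∑ o : Obs 𝒴 𝒮 𝒳, pt t o = 1) →
      (∀ o, DifferentiableAt ℝ (fun t => pt t o) 0) →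
      HasDerivAt (fun t => thetaP val (pt t))
        (∑ o : Obs 𝒴 𝒮 𝒳, p o * (g o * deriv (fun t => Real.log (pt t o)) 0)) 0) :
    ∀ o, g o = effIF val p o := by
  classical
  have hObs : Nonempty (Obs 𝒴 𝒮 𝒳) := by
    by_contra hc
    rw [not_nonempty_iff] at hc
    rw [Finset.univ_eq_empty, Finset.sum_empty] at hsum
    exact one_ne_zero hsum.symm
  obtain ⟨⟨y0, m0, e0, x0⟩⟩ := hObs
  haveI : Nonempty 𝒴 := ⟨y0⟩
  haveI : Nonempty 𝒮 := ⟨m0⟩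
  haveI : Nonempty 𝒳 := ⟨x0⟩
  have hn : ∀ (m : 𝒮) (x : 𝒳), jointMEX p m true x ≠ 0 := fun m x =>
    ne_of_gt (Finset.sum_pos (fun y _ => hpos _) Finset.univ_nonempty)
  have hr : ∀ x : 𝒳, jointEX p true x ≠ 0 := fun x =>
    ne_of_gt (Finset.sum_pos
      (fun y _ => Finset.sum_pos (fun m _ => hpos _) Finset.univ_nonempty) Finset.univ_nonempty)
  have hdx : ∀ x : 𝒳, jointEX p false x ≠ 0 := fun x =>
    ne_of_gt (Finset.sum_pos
      (fun y _ => Finset.sum_pos (fun m _ => hpos _) Finset.univ_nonempty) Finset.univ_nonempty)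
  have hw : ∀ x : 𝒳, margX p x ≠ 0 := fun x =>
    ne_of_gt (Finset.sum_pos
      (fun y _ => Finset.sum_pos
        (fun m _ => Finset.sum_pos (fun e _ => hpos _) Finset.univ_nonempty)
        Finset.univ_nonempty) Finset.univ_nonempty)
  have hS0 : ∑ o : Obs 𝒴 𝒮 𝒳, p o * effIF val p o = 0 :=
    MedIFAux.effIF_mean_zero val p hn hr hdx hw hsum
  set d : Obs 𝒴 𝒮 𝒳 → ℝ := fun o => g o - effIF val p o with hdDef
  have hd0 : ∑ o : Obs 𝒴 𝒮 𝒳, p o * d o = 0 := by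
    simp only [hdDef, mul_sub, Finset.sum_sub_distrib, hg0, hS0, sub_zero]
  set ε : ℝ := (1 + ∑ o : Obs 𝒴 𝒮 𝒳, |d o|)⁻¹ with hεdef
  have habs : (0:ℝ) ≤ ∑ o : Obs 𝒴 𝒮 𝒳, |d o| := Finset.sum_nonneg fun o _ => abs_nonneg _
  have hεpos : 0 < ε := by rw [hεdef]; exact inv_pos.mpr (by linarith)
  set pt : ℝ → Obs 𝒴 𝒮 𝒳 → ℝ := fun t o => p o * (1 + t * d o) with hptdef
  have hbound : ∀ t : ℝ, |t| < ε → ∀ o, 0 < 1 + t * d o := by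
    intro t ht o
    have h1 : |t * d o| < 1 := by
      rw [abs_mul]
      have hle : |d o| ≤ ∑ o' : Obs 𝒴 𝒮 𝒳, |d o'| :=
        Finset.single_le_sum (fun o' _ => abs_nonneg (d o')) (Finset.mem_univ o)
      calc |t| * |d o| ≤ |t| * (1 + ∑ o' : Obs 𝒴 𝒮 𝒳, |d o'|) := by
            apply mul_le_mul_of_nonneg_left (by linarith) (abs_nonneg t)
        _ < ε * (1 + ∑ o' : Obs 𝒴 𝒮 𝒳, |d o'|) :=
            mul_lt_mul_of_pos_right ht (by linarith)
        _ = 1 := by rw [hεdef]; field_simp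
    have h2 := neg_lt_of_abs_lt h1
    linarith
  have hpt0 : pt 0 = p := by funext o; simp [hptdef]
  have hptpos : ∀ t, |t| < ε → ∀ o, 0 < pt t o := fun t ht o =>
    mul_pos (hpos o) (hbound t ht o)
  have hptsum : ∀ t, |t| < ε → ∑ o : Obs 𝒴 𝒮 𝒳, pt t o = 1 := by
    intro t _
    simp only [hptdef]
    rw [MedIFAux.sum_affine p d t, hsum, hd0, mul_zero, add_zero]
  have haffd : ∀ o, HasDerivAt (fun t => pt t o) (p o * (1 * d o)) 0 := by
    intro o
    exact (((hasDerivAt_id (0:ℝ)).mul_const (d o)).const_add 1).const_mul (p o)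
  have hptdiff : ∀ o, DifferentiableAt ℝ (fun t => pt t o) 0 := fun o =>
    (haffd o).differentiableAt
  have hscore : ∀ o, deriv (fun t => Real.log (pt t o)) 0 = d o := by
    intro o
    have hne : pt 0 o ≠ 0 := by
      rw [hpt0]; exact ne_of_gt (hpos o)
    have hlog := (haffd o).log hne
    rw [hlog.deriv, hpt0, one_mul]
    exact mul_div_cancel_left₀ _ (ne_of_gt (hpos o))
  have hderiv1 := hg ε hεpos pt hpt0 hptpos hptsum hptdiff
  have hval : (∑ o : Obs 𝒴 𝒮 𝒳, p o * (g o * deriv (fun t => Real.log (pt t o)) 0))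
      = ∑ o : Obs 𝒴 𝒮 𝒳, p o * (g o * d o) :=
    Finset.sum_congr rfl fun o _ => by rw [hscore o]
  rw [hval] at hderiv1
  have hderiv2 : HasDerivAt (fun t => thetaP val (pt t)) (MedIFAux.Dval val p d) 0 := by
    simp only [hptdef]
    exact MedIFAux.theta_hasDeriv val p d hn hdx
  have huniq : (∑ o : Obs 𝒴 𝒮 𝒳, p o * (g o * d o)) = MedIFAux.Dval val p d :=
    hderiv1.unique hderiv2
  rw [MedIFAux.key_algebra val p d hn hr hdx hw] at huniq
  have hRHS : ∑ o : Obs 𝒴 𝒮 𝒳, p o * d o * (effIF val p o + thetaP val p)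
      = (∑ o : Obs 𝒴 𝒮 𝒳, p o * (effIF val p o * d o)) + (∑ o : Obs 𝒴 𝒮 𝒳, p o * d o) * thetaP val p := by
    rw [Finset.sum_mul, ← Finset.sum_add_distrib]
    exact Finset.sum_congr rfl fun o _ => by ring
  rw [hRHS, hd0, zero_mul, add_zero] at huniq
  have hzero : ∑ o : Obs 𝒴 𝒮 𝒳, p o * (d o * d o) = 0 := by
    have hsplit : ∑ o : Obs 𝒴 𝒮 𝒳, p o * (d o * d o)
        = (∑ o : Obs 𝒴 𝒮 𝒳, p o * (g o * d o)) - ∑ o : Obs 𝒴 𝒮 𝒳, p o * (effIF val p o * d o) := by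
      rw [← Finset.sum_sub_distrib]
      exact Finset.sum_congr rfl fun o _ => by simp only [hdDef]; ring
    rw [hsplit, huniq, sub_self]
  intro o
  have hterm : ∀ o' ∈ Finset.univ, (0:ℝ) ≤ p o' * (d o' * d o') := fun o' _ =>
    mul_nonneg (le_of_lt (hpos o')) (mul_self_nonneg _)
  have h0 := (Finset.sum_eq_zero_iff_of_nonneg hterm).mp hzero o (Finset.mem_univ o)
  have hd_o : d o = 0 := by
    rcases mul_eq_zero.mp h0 with h' | h'
    · exact absurd h' (ne_of_gt (hpos o))
    · exact mul_self_eq_zero.mp h'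
  have : g o - effIF val p o = 0 := hd_o
  linarith
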